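/- Let E be a commutative additively finite monoid whose nonzero elements form a subsemigroup. The linear map M : k⟨multi-compositions with exponents in E⟩ → EQSym[m], sending a multi-composition w to the monomial multi-quasisymmetric function M_w, is a bijection and satisfies M(w1 * w2) = M_{w1} M_{w2}, where * is the quasi-shuffle product. Consequently EQSym[m] is a subalgebra of the formal power series algebra k[[X]]^E. -/

import Mathlib

open scoped Classical

/-- The quasi-shuffle product of two words over an alphabet `C` with a binary
operation `op`, with values in the free `k`-module on words. -/
noncomputable def qsh {k : Type*} [CommRing k] {C : Type*} (op : C → C → C) :
    List C → List C → (List C →₀ k)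
  | [], y => Finsupp.single y 1
  | x, [] => Finsupp.single x 1
  | a :: x, b :: y =>
      (qsh op x (b :: y)).mapDomain (a :: ·) + (qsh op (a :: x) y).mapDomain (b :: ·) +
        (qsh op x y).mapDomain (op a b :: ·)
  termination_by x y => x.length + y.length
  decreasing_by all_goals simp [List.length_cons] <;> omega

/-- The exponent of `x_j^w` for a formal monomial `w ∈ [m]^E`. -/
noncomputable def colExpE {E : Type*} [AddCommMonoid E] (m : ℕ)
    (w : Fin m → E) (j : ℕ+) : (Fin m × ℕ+) →₀ E :=
  ∑ i : Fin m, Finsupp.single (i, j) (w i)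

/-- The exponent of the monomial `x_{j_1}^{w_1} ⋯ x_{j_k}^{w_k}`. -/
noncomputable def seqExpE {E : Type*} [AddCommMonoid E] (m : ℕ)
    (w : List (Fin m → E)) (j : List ℕ+) : (Fin m × ℕ+) →₀ E :=
  (List.zipWith (colExpE m) w j).sum

/-- The monomial multi-quasisymmetric function with semigroup exponents,
`M_w = ∑_{j_1 < ⋯ < j_k} x_{j_1}^{w_1} ⋯ x_{j_k}^{w_k}`, as a formal power
series with exponents in `E` (a coefficient function on monomials). -/
noncomputable def MwE (k : Type*) [CommRing k] {E : Type*} [AddCommMonoid E]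
    (m : ℕ) (w : List (Fin m → E)) : ((Fin m × ℕ+) →₀ E) → k :=
  fun d => if ∃ j : List ℕ+, j.length = w.length ∧ j.Chain' (· < ·) ∧
      seqExpE m w j = d then 1 else 0

/-- The multiplication of the formal power series algebra `k[[X]]^E`. -/
noncomputable def mulE {k : Type*} [CommRing k] {E : Type*} [AddCommMonoid E]
    (m : ℕ) (f g : ((Fin m × ℕ+) →₀ E) → k) : ((Fin m × ℕ+) →₀ E) → k :=
  fun d => ∑ᶠ p ∈ {p : ((Fin m × ℕ+) →₀ E) × ((Fin m × ℕ+) →₀ E) |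
    p.1 + p.2 = d}, f p.1 * g p.2

section basics
variable {E : Type*} [AddCommMonoid E] {m : ℕ}

lemma colExpE_apply (w : Fin m → E) (j : ℕ+) (i : Fin m) (j' : ℕ+) :
    colExpE m w j (i, j') = if j' = j then w i else 0 := by
  rw [colExpE, Finsupp.finset_sum_apply]
  simp only [Finsupp.single_apply, Prod.mk.injEq]
  rcases eq_or_ne j' j with h | h
  · subst h
    simp only [and_true]
    rw [Finset.sum_ite_eq' Finset.univ i w]
    simp
  · simp [Ne.symm h, h]

lemma colExpE_add (a b : Fin m → E) (j : ℕ+) :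
    colExpE m (a + b) j = colExpE m a j + colExpE m b j := by
  unfold colExpE
  rw [← Finset.sum_add_distrib]
  refine Finset.sum_congr rfl fun i _ => ?_
  rw [Pi.add_apply, Finsupp.single_add]

lemma seqExpE_nil (j : List ℕ+) : seqExpE m ([] : List (Fin m → E)) j = 0 := by
  simp [seqExpE]

lemma seqExpE_nil' (w : List (Fin m → E)) : seqExpE m w [] = 0 := by simp [seqExpE]

lemma seqExpE_cons (a : Fin m → E) (w : List (Fin m → E)) (c : ℕ+) (j : List ℕ+) :
    seqExpE m (a :: w) (c :: j) = colExpE m a c + seqExpE m w j := by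
  simp [seqExpE]

lemma seqExpE_apply_notMem (w : List (Fin m → E)) (j : List ℕ+) (i : Fin m) (c : ℕ+)
    (hc : c ∉ j) : seqExpE m w j (i, c) = 0 := by
  induction w generalizing j with
  | nil => simp [seqExpE_nil]
  | cons a w ih =>
    cases j with
    | nil => simp [seqExpE_nil']
    | cons e j =>
      simp only [List.mem_cons, not_or] at hc
      rw [seqExpE_cons, Finsupp.add_apply, ih j hc.2, colExpE_apply]
      simp [hc.1]

lemma chain'_cons_pair {c : ℕ+} {j : List ℕ+} (h : (c :: j).Chain' (· < ·)) :
    j.Chain' (· < ·) ∧ ∀ x ∈ j, c < x := by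
  rw [List.Chain', List.isChain_iff_pairwise, List.pairwise_cons] at h
  exact ⟨List.isChain_iff_pairwise.mpr h.2, h.1⟩

lemma chain'_head_notMem {c : ℕ+} {j : List ℕ+} (h : (c :: j).Chain' (· < ·)) : c ∉ j :=
  fun hm => absurd ((chain'_cons_pair h).2 c hm) (lt_irrefl c)

lemma seqExpE_apply_head (a : Fin m → E) (w : List (Fin m → E)) (c : ℕ+) (j : List ℕ+)
    (i : Fin m) (hc : c ∉ j) : seqExpE m (a :: w) (c :: j) (i, c) = a i := by
  rw [seqExpE_cons, Finsupp.add_apply, seqExpE_apply_notMem _ _ _ _ hc, colExpE_apply]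
  simp

/-- Uniqueness: a monomial exponent determines the multicomposition and columns. -/
lemma seq_uniq : ∀ {w w' : List (Fin m → E)} {j j' : List ℕ+},
    (∀ c ∈ w, c ≠ 0) → (∀ c ∈ w', c ≠ 0) →
    j.Chain' (· < ·) → j'.Chain' (· < ·) →
    j.length = w.length → j'.length = w'.length →
    seqExpE m w j = seqExpE m w' j' → w = w' ∧ j = j' := by
  intro w
  induction w with
  | nil =>
    intro w' j j' _ hw' _ hc' hl hl' heq
    have hj : j = [] := List.length_eq_zero_iff.mp hl
    subst hj
    cases w' with
    | nil => exact ⟨rfl, (List.length_eq_zero_iff.mp hl').symm⟩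
    | cons a' t' =>
      cases j' with
      | nil => simp at hl'
      | cons c' jt' =>
        exfalso
        obtain ⟨i, hi⟩ := Function.ne_iff.mp (hw' a' (List.mem_cons_self))
        have h0 : (seqExpE m ([] : List (Fin m → E)) []) (i, c') = 0 := by
          rw [seqExpE_nil]; rfl
        rw [heq, seqExpE_apply_head _ _ _ _ _ (chain'_head_notMem hc')] at h0
        exact hi (by simpa using h0)
  | cons a t ih =>
    intro w' j j' hw hw' hc hc' hl hl' heq
    cases j with
    | nil => simp at hl
    | cons c jt =>
    cases w' with
    | nil =>
      exfalso
      have hj' : j' = [] := List.length_eq_zero_iff.mp hl'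
      subst hj'
      obtain ⟨i, hi⟩ := Function.ne_iff.mp (hw a (List.mem_cons_self))
      have h0 : (seqExpE m ([] : List (Fin m → E)) []) (i, c) = 0 := by
        rw [seqExpE_nil]; rfl
      rw [← heq, seqExpE_apply_head _ _ _ _ _ (chain'_head_notMem hc)] at h0
      exact hi (by simpa using h0)
    | cons a' t' =>
      cases j' with
      | nil => simp at hl'
      | cons c' jt' =>
        rcases lt_trichotomy c c' with hlt | heqc | hgt
        · exfalso
          obtain ⟨i, hi⟩ := Function.ne_iff.mp (hw a (List.mem_cons_self))
          have h1 : seqExpE m (a' :: t') (c' :: jt') (i, c) = 0 := by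
            refine seqExpE_apply_notMem _ _ _ _ ?_
            intro hm
            rcases List.mem_cons.mp hm with h | h
            · exact absurd h (ne_of_lt hlt)
            · exact absurd (hlt.trans ((chain'_cons_pair hc').2 c h)) (lt_irrefl c)
          rw [← heq, seqExpE_apply_head _ _ _ _ _ (chain'_head_notMem hc)] at h1
          exact hi (by simpa using h1)
        · subst heqc
          have hvals : ∀ i : Fin m, a i = a' i := by
            intro i
            have h1 := DFunLike.congr_fun heq (i, c)
            simpa [seqExpE_apply_head _ _ _ _ _ (chain'_head_notMem hc),
              seqExpE_apply_head _ _ _ _ _ (chain'_head_notMem hc')] using h1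
          have haa : a = a' := funext hvals
          subst haa
          have htail : seqExpE m t jt = seqExpE m t' jt' := by
            ext ⟨i, x⟩
            rcases eq_or_ne x c with hx | hx
            · subst hx
              rw [seqExpE_apply_notMem _ _ _ _ (chain'_head_notMem hc),
                seqExpE_apply_notMem _ _ _ _ (chain'_head_notMem hc')]
            · have h1 := DFunLike.congr_fun heq (i, x)
              simp only [seqExpE_cons, Finsupp.coe_add, Pi.add_apply] at h1
              rwa [colExpE_apply, if_neg hx, zero_add, zero_add] at h1
          obtain ⟨ht, hj⟩ := ih (fun x hx => hw x (List.mem_cons_of_mem _ hx))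
            (fun x hx => hw' x (List.mem_cons_of_mem _ hx))
            (chain'_cons_pair hc).1 (chain'_cons_pair hc').1
            (Nat.succ_injective hl) (Nat.succ_injective hl') htail
          exact ⟨by rw [ht], by rw [hj]⟩
        · exfalso
          obtain ⟨i, hi⟩ := Function.ne_iff.mp (hw' a' (List.mem_cons_self))
          have h1 : seqExpE m (a :: t) (c :: jt) (i, c') = 0 := by
            refine seqExpE_apply_notMem _ _ _ _ ?_
            intro hm
            rcases List.mem_cons.mp hm with h | h
            · exact absurd h (ne_of_lt hgt)
            · exact absurd (hgt.trans ((chain'_cons_pair hc).2 c' h)) (lt_irrefl c')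
          rw [heq, seqExpE_apply_head _ _ _ _ _ (chain'_head_notMem hc')] at h1
          exact hi (by simpa using h1)

end basics

section s2
variable {E : Type*} [AddCommMonoid E] {m : ℕ}

def canonChain (n : ℕ) : List ℕ+ := (List.range n).map (fun i => Nat.succPNat i)

lemma canonChain_length (n : ℕ) : (canonChain n).length = n := by simp [canonChain]

lemma canonChain_chain' (n : ℕ) : (canonChain n).Chain' (· < ·) := by
  rw [List.Chain', List.isChain_iff_pairwise, canonChain, List.pairwise_map]
  exact (List.pairwise_lt_range (n := n)).imp (fun h => by
    simp only [← PNat.coe_lt_coe, Nat.succPNat_coe]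
    omega)

-- finiteness of the decomposition set
lemma decomp_finite {E : Type*} [AddCommMonoid E]
    (hfin : ∀ e : E, {p : E × E | p.1 + p.2 = e}.Finite)
    (hsub : ∀ a b : E, a ≠ 0 → b ≠ 0 → a + b ≠ 0) {m : ℕ} (d : (Fin m × ℕ+) →₀ E) :
    {p : ((Fin m × ℕ+) →₀ E) × ((Fin m × ℕ+) →₀ E) | p.1 + p.2 = d}.Finite := by
  have hzz : ∀ a b : E, a + b = 0 → a = 0 ∧ b = 0 := by
    intro a b hab
    by_cases ha : a = 0
    · subst ha; exact ⟨rfl, by simpa using hab⟩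
    · by_cases hb : b = 0
      · exact absurd hab (by simp [hb] at *; exact fun h => ha h)
      · exact absurd hab (hsub a b ha hb)
  rw [Set.finite_coe_iff.symm]
  haveI : ∀ x : Fin m × ℕ+, Finite {q : E × E // q.1 + q.2 = d x} := by
    intro x
    exact (hfin (d x)).to_subtype
  haveI : Finite (∀ x : d.support, {q : E × E // q.1 + q.2 = d x.1}) := by
    infer_instance
  refine Finite.of_injective
    (fun p : {p : ((Fin m × ℕ+) →₀ E) × ((Fin m × ℕ+) →₀ E) | p.1 + p.2 = d} =>
      fun x : d.support => (⟨(p.1.1 x.1, p.1.2 x.1), by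
        have := DFunLike.congr_fun p.2 x.1
        simpa using this⟩ : {q : E × E // q.1 + q.2 = d x.1})) ?_
  intro p q hpq
  have hkey : ∀ x : Fin m × ℕ+, p.1.1 x = q.1.1 x ∧ p.1.2 x = q.1.2 x := by
    intro x
    by_cases hx : x ∈ d.support
    · have := congrFun hpq ⟨x, hx⟩
      have h1 := congrArg Subtype.val this
      exact ⟨congrArg Prod.fst h1, congrArg Prod.snd h1⟩
    · have hd : d x = 0 := Finsupp.notMem_support_iff.mp hx
      have hp : p.1.1 x + p.1.2 x = 0 := by
        have := DFunLike.congr_fun p.2 x; simpa [hd] using this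
      have hq : q.1.1 x + q.1.2 x = 0 := by
        have := DFunLike.congr_fun q.2 x; simpa [hd] using this
      obtain ⟨h1, h2⟩ := hzz _ _ hp
      obtain ⟨h3, h4⟩ := hzz _ _ hq
      exact ⟨by rw [h1, h3], by rw [h2, h4]⟩
  apply Subtype.ext
  apply Prod.ext
  · ext x; exact (hkey x).1
  · ext x; exact (hkey x).2

end s2

section s3
variable (k : Type*) [CommRing k] {E : Type*} [AddCommMonoid E] {m : ℕ}

lemma MwE_canon {w w' : List (Fin m → E)} (hw : ∀ c ∈ w, c ≠ 0) (hw' : ∀ c ∈ w', c ≠ 0) :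
    MwE k m w' (seqExpE m w (canonChain w.length)) = if w' = w then 1 else 0 := by
  unfold MwE
  by_cases h : ∃ j : List ℕ+, j.length = w'.length ∧ j.Chain' (· < ·) ∧
      seqExpE m w' j = seqExpE m w (canonChain w.length)
  · obtain ⟨j, hj1, hj2, hj3⟩ := h
    obtain ⟨hww, -⟩ := seq_uniq hw' hw hj2 (canonChain_chain' _) hj1 (canonChain_length _) hj3
    rw [if_pos ⟨j, hj1, hj2, hj3⟩, if_pos hww]
  · rw [if_neg h, if_neg]
    intro hww
    exact h ⟨canonChain w.length, by rw [hww, canonChain_length], canonChain_chain' _, by rw [hww]⟩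

theorem part1 : LinearIndependent k
    (fun w : {w : List (Fin m → E) // ∀ c ∈ w, c ≠ 0} => MwE k m w.1) := by
  rw [linearIndependent_iff]
  intro l hl
  ext w₀
  rw [Finsupp.linearCombination_apply] at hl
  have h := congrFun hl (seqExpE m w₀.1 (canonChain w₀.1.length))
  rw [Finsupp.sum, Finset.sum_apply] at h
  simp only [Pi.smul_apply, smul_eq_mul, Pi.zero_apply] at h
  have hterm : ∀ w ∈ l.support,
      l w * MwE k m w.1 (seqExpE m w₀.1 (canonChain w₀.1.length)) =
        if w = w₀ then l w else 0 := by
    intro w _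
    rw [MwE_canon k w₀.2 w.2]
    by_cases hww : w = w₀
    · simp [hww]
    · rw [if_neg (fun h' => hww (Subtype.ext h')), if_neg hww, mul_zero]
  rw [Finset.sum_congr rfl hterm, Finset.sum_ite_eq' l.support w₀ (fun w => l w)] at h
  by_cases hmem : w₀ ∈ l.support
  · rw [if_pos hmem] at h; simpa using h
  · simpa using Finsupp.notMem_support_iff.mp hmem

end s3

inductive MS : Type
  | L | R | B
deriving DecidableEq

instance : Fintype MS := ⟨{.L, .R, .B}, fun x => by cases x <;> simp⟩

/-- Merge two words according to a pattern. -/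
def mrg {C : Type*} (op : C → C → C) : List MS → List C → List C → Option (List C)
  | .L :: s, a :: x, y => (mrg op s x y).map (a :: ·)
  | .R :: s, x, b :: y => (mrg op s x y).map (b :: ·)
  | .B :: s, a :: x, b :: y => (mrg op s x y).map (op a b :: ·)
  | [], [], [] => some []
  | _, _, _ => none

def exL : List MS → List ℕ+ → List ℕ+
  | .L :: s, c :: j => c :: exL s j
  | .B :: s, c :: j => c :: exL s j
  | .R :: s, _ :: j => exL s j
  | _, _ => []

def exR : List MS → List ℕ+ → List ℕ+
  | .R :: s, c :: j => c :: exR s j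
  | .B :: s, c :: j => c :: exR s j
  | .L :: s, _ :: j => exR s j
  | _, _ => []

section mrglemmas
variable {C : Type*} (op : C → C → C)

lemma mrg_nil_inv {x y : List C} {z : List C} (h : mrg op [] x y = some z) :
    x = [] ∧ y = [] ∧ z = [] := by
  cases x <;> cases y <;> simp_all [mrg]

lemma mrg_nil_left_inv : ∀ {s : List MS} {y z : List C},
    mrg op s [] y = some z → z = y ∧ s = List.replicate y.length .R := by
  intro s
  induction s with
  | nil => intro y z h; obtain ⟨-, h2, h3⟩ := mrg_nil_inv op h; simp [h2, h3]
  | cons A s ih =>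
    intro y z h
    cases A with
    | L => simp [mrg] at h
    | B => simp [mrg] at h
    | R =>
      cases y with
      | nil => simp [mrg] at h
      | cons b y' =>
        rw [mrg] at h
        obtain ⟨z', hz', rfl⟩ := Option.map_eq_some_iff.mp h
        obtain ⟨rfl, rfl⟩ := ih hz'
        simp [List.replicate_succ]

lemma mrg_nil_right_inv : ∀ {s : List MS} {x z : List C},
    mrg op s x [] = some z → z = x ∧ s = List.replicate x.length .L := by
  intro s
  induction s with
  | nil => intro x z h; obtain ⟨h1, -, h3⟩ := mrg_nil_inv op h; simp [h1, h3]
  | cons A s ih =>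
    intro x z h
    cases A with
    | R => simp [mrg] at h
    | B => cases x <;> simp [mrg] at h
    | L =>
      cases x with
      | nil => simp [mrg] at h
      | cons a x' =>
        rw [mrg] at h
        obtain ⟨z', hz', rfl⟩ := Option.map_eq_some_iff.mp h
        obtain ⟨rfl, rfl⟩ := ih hz'
        simp [List.replicate_succ]

lemma mrg_nil_left (y : List C) : mrg op (List.replicate y.length .R) [] y = some y := by
  induction y with
  | nil => simp [mrg]
  | cons b y ih => simp [List.replicate_succ, mrg, ih]

lemma mrg_nil_right (x : List C) : mrg op (List.replicate x.length .L) x [] = some x := by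
  induction x with
  | nil => simp [mrg]
  | cons a x ih => simp [List.replicate_succ, mrg, ih]

lemma mrg_cons_cons {s : List MS} {a b : C} {x y z : List C} :
    mrg op s (a :: x) (b :: y) = some z ↔
      (∃ s' z', s = .L :: s' ∧ z = a :: z' ∧ mrg op s' x (b :: y) = some z') ∨
      (∃ s' z', s = .R :: s' ∧ z = b :: z' ∧ mrg op s' (a :: x) y = some z') ∨
      (∃ s' z', s = .B :: s' ∧ z = op a b :: z' ∧ mrg op s' x y = some z') := by
  constructor
  · intro h
    cases s with
    | nil => simp [mrg] at h
    | cons A s' =>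
      cases A with
      | L =>
        rw [mrg] at h
        obtain ⟨z', hz', rfl⟩ := Option.map_eq_some_iff.mp h
        exact Or.inl ⟨s', z', rfl, rfl, hz'⟩
      | R =>
        rw [mrg] at h
        obtain ⟨z', hz', rfl⟩ := Option.map_eq_some_iff.mp h
        exact Or.inr (Or.inl ⟨s', z', rfl, rfl, hz'⟩)
      | B =>
        rw [mrg] at h
        obtain ⟨z', hz', rfl⟩ := Option.map_eq_some_iff.mp h
        exact Or.inr (Or.inr ⟨s', z', rfl, rfl, hz'⟩)
  · rintro (⟨s', z', rfl, rfl, h⟩ | ⟨s', z', rfl, rfl, h⟩ | ⟨s', z', rfl, rfl, h⟩) <;>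
      simp [mrg, h]

lemma mrg_length : ∀ {s : List MS} {x y z : List C}, mrg op s x y = some z →
    s.length = z.length ∧ s.length ≤ x.length + y.length := by
  intro s
  induction s with
  | nil => intro x y z h; obtain ⟨-, -, rfl⟩ := mrg_nil_inv op h; simp
  | cons A s ih =>
    intro x y z h
    cases A with
    | L =>
      cases x with
      | nil => simp [mrg] at h
      | cons a x' =>
        rw [mrg] at h
        obtain ⟨z', hz', rfl⟩ := Option.map_eq_some_iff.mp h
        obtain ⟨h1, h2⟩ := ih hz'
        constructor <;> simp [h1, h2] <;> omega
    | R =>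
      cases y with
      | nil => cases x <;> simp [mrg] at h
      | cons b y' =>
        rw [mrg] at h
        obtain ⟨z', hz', rfl⟩ := Option.map_eq_some_iff.mp h
        obtain ⟨h1, h2⟩ := ih hz'
        constructor <;> simp [h1, h2] <;> omega
    | B =>
      cases x with
      | nil => simp [mrg] at h
      | cons a x' =>
        cases y with
        | nil => simp [mrg] at h
        | cons b y' =>
          rw [mrg] at h
          obtain ⟨z', hz', rfl⟩ := Option.map_eq_some_iff.mp h
          obtain ⟨h1, h2⟩ := ih hz'
          constructor <;> simp [h1, h2] <;> omega

end mrglemmas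

lemma exL_sublist : ∀ (s : List MS) (j : List ℕ+), List.Sublist (exL s j) j := by
  intro s
  induction s with
  | nil => intro j; simp [exL]
  | cons A s ih =>
    intro j
    cases j with
    | nil => cases A <;> simp [exL]
    | cons c j' =>
      cases A with
      | L => exact (ih j').cons₂ c
      | B => exact (ih j').cons₂ c
      | R => exact (ih j').cons c

lemma exR_sublist : ∀ (s : List MS) (j : List ℕ+), List.Sublist (exR s j) j := by
  intro s
  induction s with
  | nil => intro j; simp [exR]
  | cons A s ih =>
    intro j
    cases j with
    | nil => cases A <;> simp [exR]
    | cons c j' =>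
      cases A with
      | R => exact (ih j').cons₂ c
      | B => exact (ih j').cons₂ c
      | L => exact (ih j').cons c

lemma mem_exL_or_exR : ∀ (s : List MS) (j : List ℕ+), j.length = s.length →
    ∀ u ∈ j, u ∈ exL s j ∨ u ∈ exR s j := by
  intro s
  induction s with
  | nil => intro j hj u hu; rw [List.length_eq_zero_iff.mp hj] at hu; simp at hu
  | cons A s ih =>
    intro j hj u hu
    cases j with
    | nil => simp at hu
    | cons c j' =>
      rcases List.mem_cons.mp hu with rfl | hu'
      · cases A with
        | L => left; simp [exL]
        | B => left; simp [exL]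
        | R => right; simp [exR]
      · have := ih j' (Nat.succ_injective hj) u hu'
        cases A with
        | L => rcases this with h | h
               · left; simp [exL, h]
               · right; simpa [exR] using h
        | B => rcases this with h | h
               · left; simp [exL, h]
               · right; simp [exR, h]
        | R => rcases this with h | h
               · left; simpa [exL] using h
               · right; simp [exR, h]

section exmain
variable {E : Type*} [AddCommMonoid E] {m : ℕ}

/-- Main extraction lemma: lengths and additivity of exponents. -/
lemma mrg_seqExp : ∀ {s : List MS} {x y z : List (Fin m → E)} {j : List ℕ+},
    mrg (· + ·) s x y = some z → j.length = z.length →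
    (exL s j).length = x.length ∧ (exR s j).length = y.length ∧
    seqExpE m z j = seqExpE m x (exL s j) + seqExpE m y (exR s j) := by
  intro s
  induction s with
  | nil =>
    intro x y z j h hj
    obtain ⟨rfl, rfl, rfl⟩ := mrg_nil_inv _ h
    have : j = [] := List.length_eq_zero_iff.mp hj
    subst this
    simp [exL, exR, seqExpE_nil]
  | cons A s ih =>
    intro x y z j h hj
    cases A with
    | L =>
      cases x with
      | nil => simp [mrg] at h
      | cons a x' =>
        rw [mrg] at h
        obtain ⟨z', hz', rfl⟩ := Option.map_eq_some_iff.mp h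
        cases j with
        | nil => simp at hj
        | cons c j' =>
          obtain ⟨h1, h2, h3⟩ := ih hz' (Nat.succ_injective hj)
          refine ⟨by simp [exL, h1], by simp [exR, h2], ?_⟩
          show seqExpE m (a :: z') (c :: j') =
            seqExpE m (a :: x') (c :: exL s j') + seqExpE m y (exR s j')
          rw [seqExpE_cons, seqExpE_cons, h3, add_assoc]
    | R =>
      cases y with
      | nil => cases x <;> simp [mrg] at h
      | cons b y' =>
        rw [mrg] at h
        obtain ⟨z', hz', rfl⟩ := Option.map_eq_some_iff.mp h
        cases j with
        | nil => simp at hj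
        | cons c j' =>
          obtain ⟨h1, h2, h3⟩ := ih hz' (Nat.succ_injective hj)
          refine ⟨by simp [exL, h1], by simp [exR, h2], ?_⟩
          show seqExpE m (b :: z') (c :: j') =
            seqExpE m x (exL s j') + seqExpE m (b :: y') (c :: exR s j')
          rw [seqExpE_cons, seqExpE_cons, h3, add_left_comm]
    | B =>
      cases x with
      | nil => simp [mrg] at h
      | cons a x' =>
        cases y with
        | nil => simp [mrg] at h
        | cons b y' =>
          rw [mrg] at h
          obtain ⟨z', hz', rfl⟩ := Option.map_eq_some_iff.mp h
          cases j with
          | nil => simp at hj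
          | cons c j' =>
            obtain ⟨h1, h2, h3⟩ := ih hz' (Nat.succ_injective hj)
            refine ⟨by simp [exL, h1], by simp [exR, h2], ?_⟩
            show seqExpE m ((a + b) :: z') (c :: j') =
              seqExpE m (a :: x') (c :: exL s j') + seqExpE m (b :: y') (c :: exR s j')
            rw [seqExpE_cons, seqExpE_cons, seqExpE_cons, h3, colExpE_add,
              add_add_add_comm]
end exmain


section injsur
variable {C : Type*} (op : C → C → C)

/-- Injectivity of `(s, j) ↦ (exL s j, exR s j)`. -/
lemma mrg_inj : ∀ (s s' : List MS) (j j' : List ℕ+) {x y : List C} {z z' : List C},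
    mrg op s x y = some z → mrg op s' x y = some z' →
    j.Chain' (· < ·) → j'.Chain' (· < ·) → j.length = z.length → j'.length = z'.length →
    exL s j = exL s' j' → exR s j = exR s' j' → s = s' ∧ j = j' := by
  intro s
  induction s with
  | nil =>
    intro s' j j' x y z z' h h' hc hc' hl hl' hL hR
    obtain ⟨rfl, rfl, rfl⟩ := mrg_nil_inv op h
    have hj : j = [] := List.length_eq_zero_iff.mp hl
    cases s' with
    | nil =>
      obtain ⟨-, -, rfl⟩ := mrg_nil_inv op h'
      exact ⟨rfl, by rw [hj, List.length_eq_zero_iff.mp hl']⟩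
    | cons A s₀ => cases A <;> simp [mrg] at h'
  | cons A s₀ ih =>
    intro s' j j' x y z z' h h' hc hc' hl hl' hL hR
    cases s' with
    | nil =>
      obtain ⟨rfl, rfl, rfl⟩ := mrg_nil_inv op h'
      cases A <;> simp [mrg] at h
    | cons A' s₀' =>
      -- expose shapes
      cases A with
      | L =>
        cases x with
        | nil => simp [mrg] at h
        | cons a x₀ =>
          rw [mrg] at h
          obtain ⟨z₀, hz₀, rfl⟩ := Option.map_eq_some_iff.mp h
          cases j with
          | nil => simp at hl
          | cons c j₀ =>
            cases A' with
            | L =>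
              rw [mrg] at h'
              obtain ⟨z₀', hz₀', rfl⟩ := Option.map_eq_some_iff.mp h'
              cases j' with
              | nil => simp at hl'
              | cons c' j₀' =>
                simp only [exL] at hL
                have hcc : c = c' := List.head_eq_of_cons_eq hL
                subst hcc
                have hLt : exL s₀ j₀ = exL s₀' j₀' := List.tail_eq_of_cons_eq hL
                simp only [exR] at hR
                obtain ⟨rfl, rfl⟩ := ih s₀' j₀ j₀' hz₀ hz₀' (chain'_cons_pair hc).1
                  (chain'_cons_pair hc').1 (Nat.succ_injective hl) (Nat.succ_injective hl') hLt hR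
                exact ⟨rfl, rfl⟩
            | R =>
              cases y with
              | nil => simp [mrg] at h'
              | cons b y₀ =>
                rw [mrg] at h'
                obtain ⟨z₀', hz₀', rfl⟩ := Option.map_eq_some_iff.mp h'
                cases j' with
                | nil => simp at hl'
                | cons c' j₀' =>
                  exfalso
                  simp only [exL, exR] at hL hR
                  -- hL : c :: exL s₀ j₀ = exL s₀' j₀' ; hR : exR s₀ j₀ = c' :: exR s₀' j₀'
                  have hcmem : c ∈ j₀' := (exL_sublist s₀' j₀').subset (hL ▸ List.mem_cons_self)
                  have hc'mem : c' ∈ j₀ := (exR_sublist s₀ j₀).subset (hR ▸ List.mem_cons_self)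
                  exact absurd ((chain'_cons_pair hc).2 c' hc'mem)
                    (asymm ((chain'_cons_pair hc').2 c hcmem))
            | B =>
              cases y with
              | nil => simp [mrg] at h'
              | cons b y₀ =>
                rw [mrg] at h'
                obtain ⟨z₀', hz₀', rfl⟩ := Option.map_eq_some_iff.mp h'
                cases j' with
                | nil => simp at hl'
                | cons c' j₀' =>
                  exfalso
                  simp only [exL, exR] at hL hR
                  have hcc : c = c' := List.head_eq_of_cons_eq hL
                  subst hcc
                  have hcmem : c ∈ j₀ := (exR_sublist s₀ j₀).subset (hR ▸ List.mem_cons_self)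
                  exact absurd ((chain'_cons_pair hc).2 c hcmem) (lt_irrefl c)
      | R =>
        cases y with
        | nil => cases x <;> simp [mrg] at h
        | cons b y₀ =>
          rw [mrg] at h
          obtain ⟨z₀, hz₀, rfl⟩ := Option.map_eq_some_iff.mp h
          cases j with
          | nil => simp at hl
          | cons c j₀ =>
            cases A' with
            | L =>
              cases x with
              | nil => simp [mrg] at h'
              | cons a x₀ =>
                rw [mrg] at h'
                obtain ⟨z₀', hz₀', rfl⟩ := Option.map_eq_some_iff.mp h'
                cases j' with
                | nil => simp at hl'
                | cons c' j₀' =>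
                  exfalso
                  simp only [exL, exR] at hL hR
                  have hcmem : c ∈ j₀' := (exR_sublist s₀' j₀').subset (hR ▸ List.mem_cons_self)
                  have hc'mem : c' ∈ j₀ := (exL_sublist s₀ j₀).subset (hL ▸ List.mem_cons_self)
                  exact absurd ((chain'_cons_pair hc).2 c' hc'mem)
                    (asymm ((chain'_cons_pair hc').2 c hcmem))
            | R =>
              rw [mrg] at h'
              obtain ⟨z₀', hz₀', rfl⟩ := Option.map_eq_some_iff.mp h'
              cases j' with
              | nil => simp at hl'
              | cons c' j₀' =>
                simp only [exR] at hR
                have hcc : c = c' := List.head_eq_of_cons_eq hR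
                subst hcc
                have hRt : exR s₀ j₀ = exR s₀' j₀' := List.tail_eq_of_cons_eq hR
                simp only [exL] at hL
                obtain ⟨rfl, rfl⟩ := ih s₀' j₀ j₀' hz₀ hz₀' (chain'_cons_pair hc).1
                  (chain'_cons_pair hc').1 (Nat.succ_injective hl) (Nat.succ_injective hl') hL hRt
                exact ⟨rfl, rfl⟩
            | B =>
              cases x with
              | nil => simp [mrg] at h'
              | cons a x₀ =>
                rw [mrg] at h'
                obtain ⟨z₀', hz₀', rfl⟩ := Option.map_eq_some_iff.mp h'
                cases j' with
                | nil => simp at hl'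
                | cons c' j₀' =>
                  exfalso
                  simp only [exL, exR] at hL hR
                  have hcc : c = c' := List.head_eq_of_cons_eq hR
                  subst hcc
                  have hcmem : c ∈ j₀ := (exL_sublist s₀ j₀).subset (hL ▸ List.mem_cons_self)
                  exact absurd ((chain'_cons_pair hc).2 c hcmem) (lt_irrefl c)
      | B =>
        cases x with
        | nil => simp [mrg] at h
        | cons a x₀ =>
          cases y with
          | nil => simp [mrg] at h
          | cons b y₀ =>
            rw [mrg] at h
            obtain ⟨z₀, hz₀, rfl⟩ := Option.map_eq_some_iff.mp h
            cases j with
            | nil => simp at hl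
            | cons c j₀ =>
              cases A' with
              | L =>
                rw [mrg] at h'
                obtain ⟨z₀', hz₀', rfl⟩ := Option.map_eq_some_iff.mp h'
                cases j' with
                | nil => simp at hl'
                | cons c' j₀' =>
                  exfalso
                  simp only [exL, exR] at hL hR
                  have hcc : c = c' := List.head_eq_of_cons_eq hL
                  subst hcc
                  have hcmem : c ∈ j₀' := (exR_sublist s₀' j₀').subset (hR ▸ List.mem_cons_self)
                  exact absurd ((chain'_cons_pair hc').2 c hcmem) (lt_irrefl c)
              | R =>
                rw [mrg] at h'
                obtain ⟨z₀', hz₀', rfl⟩ := Option.map_eq_some_iff.mp h'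
                cases j' with
                | nil => simp at hl'
                | cons c' j₀' =>
                  exfalso
                  simp only [exL, exR] at hL hR
                  have hcc : c = c' := List.head_eq_of_cons_eq hR
                  subst hcc
                  have hcmem : c ∈ j₀' := (exL_sublist s₀' j₀').subset (hL ▸ List.mem_cons_self)
                  exact absurd ((chain'_cons_pair hc').2 c hcmem) (lt_irrefl c)
              | B =>
                rw [mrg] at h'
                obtain ⟨z₀', hz₀', rfl⟩ := Option.map_eq_some_iff.mp h'
                cases j' with
                | nil => simp at hl'
                | cons c' j₀' =>
                  simp only [exL, exR] at hL hR
                  have hcc : c = c' := List.head_eq_of_cons_eq hL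
                  subst hcc
                  obtain ⟨rfl, rfl⟩ := ih s₀' j₀ j₀' hz₀ hz₀' (chain'_cons_pair hc).1
                    (chain'_cons_pair hc').1 (Nat.succ_injective hl) (Nat.succ_injective hl')
                    (List.tail_eq_of_cons_eq hL) (List.tail_eq_of_cons_eq hR)
                  exact ⟨rfl, rfl⟩

end injsur

section sur
variable {C : Type*} (op : C → C → C)

lemma exL_replicate_R : ∀ (n : ℕ) (j : List ℕ+), exL (List.replicate n .R) j = [] := by
  intro n
  induction n with
  | zero => intro j; simp [exL]
  | succ n ih =>
    intro j
    cases j with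
    | nil => simp [List.replicate_succ, exL]
    | cons c j' => simp [List.replicate_succ, exL, ih]

lemma exR_replicate_R : ∀ (j : List ℕ+), exR (List.replicate j.length .R) j = j := by
  intro j
  induction j with
  | nil => simp [exR]
  | cons c j' ih => simp [List.replicate_succ, exR, ih]

lemma exR_replicate_L : ∀ (n : ℕ) (j : List ℕ+), exR (List.replicate n .L) j = [] := by
  intro n
  induction n with
  | zero => intro j; simp [exR]
  | succ n ih =>
    intro j
    cases j with
    | nil => simp [List.replicate_succ, exR]
    | cons c j' => simp [List.replicate_succ, exR, ih]

lemma exL_replicate_L : ∀ (j : List ℕ+), exL (List.replicate j.length .L) j = j := by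
  intro j
  induction j with
  | nil => simp [exL]
  | cons c j' ih => simp [List.replicate_succ, exL, ih]

/-- Surjectivity: every pair of chains arises from a merge pattern. -/
lemma mrg_sur : ∀ (n : ℕ) (x y : List C) (j₁ j₂ : List ℕ+),
    j₁.length + j₂.length ≤ n →
    j₁.Chain' (· < ·) → j₂.Chain' (· < ·) →
    j₁.length = x.length → j₂.length = y.length →
    ∃ s z j, mrg op s x y = some z ∧ j.Chain' (· < ·) ∧ j.length = z.length ∧
      exL s j = j₁ ∧ exR s j = j₂ ∧ (∀ u ∈ j, u ∈ j₁ ∨ u ∈ j₂) := by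
  intro n
  induction n with
  | zero =>
    intro x y j₁ j₂ hn _ _ hl₁ hl₂
    have h1 : j₁ = [] := List.length_eq_zero_iff.mp (by omega)
    have h2 : j₂ = [] := List.length_eq_zero_iff.mp (by omega)
    subst h1; subst h2
    have hx : x = [] := List.length_eq_zero_iff.mp (by omega)
    have hy : y = [] := List.length_eq_zero_iff.mp (by omega)
    subst hx; subst hy
    exact ⟨[], [], [], by simp [mrg], List.isChain_nil, rfl, rfl, rfl, by simp⟩
  | succ n ih =>
    intro x y j₁ j₂ hn hc₁ hc₂ hl₁ hl₂
    cases j₁ with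
    | nil =>
      have hx : x = [] := List.length_eq_zero_iff.mp (by simpa using hl₁.symm)
      subst hx
      refine ⟨List.replicate y.length .R, y, j₂, mrg_nil_left op y, hc₂, hl₂, ?_, ?_, ?_⟩
      · rw [exL_replicate_R]
      · rw [← hl₂, exR_replicate_R]
      · exact fun u hu => Or.inr hu
    | cons c₁ t₁ =>
      cases j₂ with
      | nil =>
        have hy : y = [] := List.length_eq_zero_iff.mp (by simpa using hl₂.symm)
        subst hy
        refine ⟨List.replicate x.length .L, x, c₁ :: t₁, mrg_nil_right op x, hc₁, hl₁, ?_, ?_, ?_⟩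
        · rw [← hl₁, exL_replicate_L]
        · rw [exR_replicate_L]
        · exact fun u hu => Or.inl hu
      | cons c₂ t₂ =>
        cases x with
        | nil => simp at hl₁
        | cons a x₀ =>
          cases y with
          | nil => simp at hl₂
          | cons b y₀ =>
            rcases lt_trichotomy c₁ c₂ with hlt | heqc | hgt
            · obtain ⟨s', z', j', hs', hcj', hlj', hexL, hexR, hmem⟩ :=
                ih x₀ (b :: y₀) t₁ (c₂ :: t₂) (by simp at hn ⊢; omega)
                  (chain'_cons_pair hc₁).1 hc₂ (Nat.succ_injective hl₁) hl₂
              refine ⟨.L :: s', a :: z', c₁ :: j', by simp [mrg, hs'], ?_, by simp [hlj'], ?_, ?_, ?_⟩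
              · rw [List.Chain', List.isChain_iff_pairwise, List.pairwise_cons]
                refine ⟨?_, List.isChain_iff_pairwise.mp hcj'⟩
                intro u hu
                rcases hmem u hu with h | h
                · exact (chain'_cons_pair hc₁).2 u h
                · rcases List.mem_cons.mp h with rfl | h'
                  · exact hlt
                  · exact hlt.trans ((chain'_cons_pair hc₂).2 u h')
              · simp [exL, hexL]
              · simp [exR, hexR]
              · intro u hu
                rcases List.mem_cons.mp hu with rfl | hu'
                · exact Or.inl (List.mem_cons_self)
                · rcases hmem u hu' with h | h
                  · exact Or.inl (List.mem_cons_of_mem _ h)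
                  · exact Or.inr h
            · subst heqc
              obtain ⟨s', z', j', hs', hcj', hlj', hexL, hexR, hmem⟩ :=
                ih x₀ y₀ t₁ t₂ (by simp at hn ⊢; omega)
                  (chain'_cons_pair hc₁).1 (chain'_cons_pair hc₂).1
                  (Nat.succ_injective hl₁) (Nat.succ_injective hl₂)
              refine ⟨.B :: s', op a b :: z', c₁ :: j', by simp [mrg, hs'], ?_, by simp [hlj'],
                ?_, ?_, ?_⟩
              · rw [List.Chain', List.isChain_iff_pairwise, List.pairwise_cons]
                refine ⟨?_, List.isChain_iff_pairwise.mp hcj'⟩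
                intro u hu
                rcases hmem u hu with h | h
                · exact (chain'_cons_pair hc₁).2 u h
                · exact (chain'_cons_pair hc₂).2 u h
              · simp [exL, hexL]
              · simp [exR, hexR]
              · intro u hu
                rcases List.mem_cons.mp hu with rfl | hu'
                · exact Or.inl (List.mem_cons_self)
                · rcases hmem u hu' with h | h
                  · exact Or.inl (List.mem_cons_of_mem _ h)
                  · exact Or.inr (List.mem_cons_of_mem _ h)
            · obtain ⟨s', z', j', hs', hcj', hlj', hexL, hexR, hmem⟩ :=
                ih (a :: x₀) y₀ (c₁ :: t₁) t₂ (by simp at hn ⊢; omega)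
                  hc₁ (chain'_cons_pair hc₂).1 hl₁ (Nat.succ_injective hl₂)
              refine ⟨.R :: s', b :: z', c₂ :: j', by simp [mrg, hs'], ?_, by simp [hlj'],
                ?_, ?_, ?_⟩
              · rw [List.Chain', List.isChain_iff_pairwise, List.pairwise_cons]
                refine ⟨?_, List.isChain_iff_pairwise.mp hcj'⟩
                intro u hu
                rcases hmem u hu with h | h
                · rcases List.mem_cons.mp h with rfl | h'
                  · exact hgt
                  · exact hgt.trans ((chain'_cons_pair hc₁).2 u h')
                · exact (chain'_cons_pair hc₂).2 u h
              · simp [exL, hexL]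
              · simp [exR, hexR]
              · intro u hu
                rcases List.mem_cons.mp hu with rfl | hu'
                · exact Or.inr (List.mem_cons_self)
                · rcases hmem u hu' with h | h
                  · exact Or.inl h
                  · exact Or.inr (List.mem_cons_of_mem _ h)

end sur

section nz
variable {E : Type*} [AddCommMonoid E] {m : ℕ}

lemma mrg_nonzero (hsub : ∀ a b : E, a ≠ 0 → b ≠ 0 → a + b ≠ 0) :
    ∀ {s : List MS} {x y z : List (Fin m → E)},
    mrg (· + ·) s x y = some z → (∀ c ∈ x, c ≠ 0) → (∀ c ∈ y, c ≠ 0) →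
    ∀ c ∈ z, c ≠ 0 := by
  intro s
  induction s with
  | nil =>
    intro x y z h _ _
    obtain ⟨-, -, rfl⟩ := mrg_nil_inv _ h
    simp
  | cons A s ih =>
    intro x y z h hx hy
    cases A with
    | L =>
      cases x with
      | nil => simp [mrg] at h
      | cons a x' =>
        rw [mrg] at h
        obtain ⟨z', hz', rfl⟩ := Option.map_eq_some_iff.mp h
        intro c hc
        rcases List.mem_cons.mp hc with rfl | hc'
        · exact hx c (List.mem_cons_self)
        · exact ih hz' (fun u hu => hx u (List.mem_cons_of_mem _ hu)) hy c hc'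
    | R =>
      cases y with
      | nil => cases x <;> simp [mrg] at h
      | cons b y' =>
        rw [mrg] at h
        obtain ⟨z', hz', rfl⟩ := Option.map_eq_some_iff.mp h
        intro c hc
        rcases List.mem_cons.mp hc with rfl | hc'
        · exact hy c (List.mem_cons_self)
        · exact ih hz' hx (fun u hu => hy u (List.mem_cons_of_mem _ hu)) c hc'
    | B =>
      cases x with
      | nil => simp [mrg] at h
      | cons a x' =>
        cases y with
        | nil => simp [mrg] at h
        | cons b y' =>
          rw [mrg] at h
          obtain ⟨z', hz', rfl⟩ := Option.map_eq_some_iff.mp h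
          intro c hc
          rcases List.mem_cons.mp hc with rfl | hc'
          · intro hzero
            obtain ⟨i, hi⟩ := Function.ne_iff.mp (hx a (List.mem_cons_self))
            have hai : a i ≠ 0 := by simpa using hi
            have hsum : a i + b i = 0 := by
              have := congrFun hzero i
              simpa using this
            by_cases hbi : b i = 0
            · rw [hbi, add_zero] at hsum
              exact hai hsum
            · exact hsub (a i) (b i) hai hbi hsum
          · exact ih hz' (fun u hu => hx u (List.mem_cons_of_mem _ hu))
              (fun u hu => hy u (List.mem_cons_of_mem _ hu)) c hc'
end nz


section q1
variable {k : Type*} [CommRing k] {C : Type*} (op : C → C → C)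

lemma patSet_finite (x y : List C) (z : List C) :
    {s : List MS | mrg op s x y = some z}.Finite :=
  (List.finite_length_le MS (x.length + y.length)).subset
    (fun s hs => (mrg_length op hs).2)

lemma qsh_coeff : ∀ (n : ℕ) (x y : List C), x.length + y.length ≤ n → ∀ z : List C,
    (qsh (k := k) op x y) z = (({s : List MS | mrg op s x y = some z}.ncard : k)) := by
  intro n
  induction n with
  | zero =>
    intro x y hn z
    have hx : x = [] := List.length_eq_zero_iff.mp (by omega)
    have hy : y = [] := List.length_eq_zero_iff.mp (by omega)
    subst hx; subst hy
    rw [show qsh (k := k) op [] [] = Finsupp.single [] 1 from by rw [qsh]]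
    rcases eq_or_ne z ([] : List C) with rfl | hz
    · rw [Finsupp.single_apply, if_pos rfl]
      have : {s : List MS | mrg op s [] [] = some []} = {[]} := by
        ext s
        simp only [Set.mem_setOf_eq, Set.mem_singleton_iff]
        constructor
        · intro h; simpa using (mrg_nil_left_inv op h).2
        · rintro rfl; simpa using mrg_nil_left op ([] : List C)
      rw [this, Set.ncard_singleton]; norm_num
    · rw [Finsupp.single_apply, if_neg (fun h => hz h.symm)]
      have : {s : List MS | mrg op s [] [] = some z} = ∅ := by
        ext s
        simp only [Set.mem_setOf_eq, Set.mem_empty_iff_false, iff_false]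
        intro h
        exact hz (mrg_nil_left_inv op h).1
      rw [this, Set.ncard_empty]; norm_num
  | succ n ih =>
    intro x y hn z
    cases x with
    | nil =>
      rw [show qsh (k := k) op [] y = Finsupp.single y 1 from by rw [qsh]]
      rcases eq_or_ne z y with rfl | hz
      · rw [Finsupp.single_apply, if_pos rfl]
        have : {s : List MS | mrg op s [] z = some z} = {List.replicate z.length .R} := by
          ext s
          simp only [Set.mem_setOf_eq, Set.mem_singleton_iff]
          constructor
          · intro h; exact (mrg_nil_left_inv op h).2
          · rintro rfl; exact mrg_nil_left op z
        rw [this, Set.ncard_singleton]; norm_num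
      · rw [Finsupp.single_apply, if_neg (fun h => hz h.symm)]
        have : {s : List MS | mrg op s [] y = some z} = ∅ := by
          ext s
          simp only [Set.mem_setOf_eq, Set.mem_empty_iff_false, iff_false]
          intro h
          exact hz (mrg_nil_left_inv op h).1
        rw [this, Set.ncard_empty]; norm_num
    | cons a x' =>
      cases y with
      | nil =>
        rw [show qsh (k := k) op (a :: x') [] = Finsupp.single (a :: x') 1 from by rw [qsh]; simp]
        rcases eq_or_ne z (a :: x') with rfl | hz
        · rw [Finsupp.single_apply, if_pos rfl]
          have : {s : List MS | mrg op s (a :: x') [] = some (a :: x')} =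
              {List.replicate (a :: x').length .L} := by
            ext s
            simp only [Set.mem_setOf_eq, Set.mem_singleton_iff]
            constructor
            · intro h; exact (mrg_nil_right_inv op h).2
            · rintro rfl; exact mrg_nil_right op (a :: x')
          rw [this, Set.ncard_singleton]; norm_num
        · rw [Finsupp.single_apply, if_neg (fun h => hz h.symm)]
          have : {s : List MS | mrg op s (a :: x') [] = some z} = ∅ := by
            ext s
            simp only [Set.mem_setOf_eq, Set.mem_empty_iff_false, iff_false]
            intro h
            exact hz (mrg_nil_right_inv op h).1
          rw [this, Set.ncard_empty]; norm_num
      | cons b y' =>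
        rw [show qsh (k := k) op (a :: x') (b :: y') =
          (qsh op x' (b :: y')).mapDomain (a :: ·) + (qsh op (a :: x') y').mapDomain (b :: ·) +
            (qsh op x' y').mapDomain (op a b :: ·) from by rw [qsh]]
        rw [Finsupp.add_apply, Finsupp.add_apply]
        have hconsinj : ∀ c : C, Function.Injective (c :: · : List C → List C) :=
          fun c u v huv => List.tail_eq_of_cons_eq huv
        cases z with
        | nil =>
          rw [Finsupp.mapDomain_notin_range _ _ (by simp),
            Finsupp.mapDomain_notin_range _ _ (by simp),
            Finsupp.mapDomain_notin_range _ _ (by simp)]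
          have : {s : List MS | mrg op s (a :: x') (b :: y') = some []} = ∅ := by
            ext s
            simp only [Set.mem_setOf_eq, Set.mem_empty_iff_false, iff_false]
            intro h
            rcases (mrg_cons_cons op).mp h with ⟨_, _, _, h2, _⟩ | ⟨_, _, _, h2, _⟩ |
              ⟨_, _, _, h2, _⟩ <;> simp at h2
          rw [this, Set.ncard_empty]; norm_num
        | cons c z₀ =>
          -- split the pattern set into three parts
          set SL : Set (List MS) :=
            {s | ∃ s', s = .L :: s' ∧ a = c ∧ mrg op s' x' (b :: y') = some z₀} with hSL
          set SR : Set (List MS) :=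
            {s | ∃ s', s = .R :: s' ∧ b = c ∧ mrg op s' (a :: x') y' = some z₀} with hSR
          set SB : Set (List MS) :=
            {s | ∃ s', s = .B :: s' ∧ op a b = c ∧ mrg op s' x' y' = some z₀} with hSB
          have hsplit : {s : List MS | mrg op s (a :: x') (b :: y') = some (c :: z₀)} =
              SL ∪ SR ∪ SB := by
            ext s
            simp only [Set.mem_setOf_eq, Set.mem_union, hSL, hSR, hSB]
            rw [mrg_cons_cons op]
            constructor
            · rintro (⟨s', z', rfl, hz, h⟩ | ⟨s', z', rfl, hz, h⟩ | ⟨s', z', rfl, hz, h⟩)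
              · obtain ⟨h1, h2⟩ := List.cons_eq_cons.mp hz
                exact Or.inl (Or.inl ⟨s', rfl, h1.symm, h2 ▸ h⟩)
              · obtain ⟨h1, h2⟩ := List.cons_eq_cons.mp hz
                exact Or.inl (Or.inr ⟨s', rfl, h1.symm, h2 ▸ h⟩)
              · obtain ⟨h1, h2⟩ := List.cons_eq_cons.mp hz
                exact Or.inr ⟨s', rfl, h1.symm, h2 ▸ h⟩
            · rintro ((⟨s', rfl, rfl, h⟩ | ⟨s', rfl, rfl, h⟩) | ⟨s', rfl, rfl, h⟩)
              · exact Or.inl ⟨s', z₀, rfl, rfl, h⟩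
              · exact Or.inr (Or.inl ⟨s', z₀, rfl, rfl, h⟩)
              · exact Or.inr (Or.inr ⟨s', z₀, rfl, rfl, h⟩)
          have hfinL : SL.Finite := by
            refine (List.finite_length_le MS ((a::x').length + (b::y').length)).subset ?_
            rintro s ⟨s', rfl, -, h⟩
            have := (mrg_length op h).2
            simp at this ⊢
            omega
          have hfinR : SR.Finite := by
            refine (List.finite_length_le MS ((a::x').length + (b::y').length)).subset ?_
            rintro s ⟨s', rfl, -, h⟩
            have := (mrg_length op h).2
            simp at this ⊢
            omega
          have hfinB : SB.Finite := by
            refine (List.finite_length_le MS ((a::x').length + (b::y').length)).subset ?_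
            rintro s ⟨s', rfl, -, h⟩
            have := (mrg_length op h).2
            simp at this ⊢
            omega
          have hdisj1 : Disjoint SL SR := by
            rw [Set.disjoint_left]
            rintro s ⟨s', rfl, -, -⟩ ⟨s'', hs'', -, -⟩
            simp at hs''
          have hdisj2 : Disjoint (SL ∪ SR) SB := by
            rw [Set.disjoint_left]
            rintro s (⟨s', rfl, -, -⟩ | ⟨s', rfl, -, -⟩) ⟨s'', hs'', -, -⟩ <;> simp at hs''
          rw [hsplit, Set.ncard_union_eq hdisj2 (hfinL.union hfinR) hfinB,
            Set.ncard_union_eq hdisj1 hfinL hfinR]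
          push_cast
          congr 1
          congr 1
          -- L term
          · rcases eq_or_ne a c with rfl | hac
            · rw [Finsupp.mapDomain_apply (hconsinj a)]
              have : SL = (.L :: ·) '' {s' : List MS | mrg op s' x' (b :: y') = some z₀} := by
                ext s
                simp only [hSL, Set.mem_setOf_eq, Set.mem_image]
                constructor
                · rintro ⟨s', rfl, -, h⟩; exact ⟨s', h, rfl⟩
                · rintro ⟨s', h, rfl⟩; exact ⟨s', rfl, by simp, h⟩
              rw [this, Set.ncard_image_of_injective _ (fun u v huv =>
                List.tail_eq_of_cons_eq huv : Function.Injective (MS.L :: · : List MS → List MS))]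
              exact ih x' (b :: y') (by simp at hn ⊢; omega) z₀
            · rw [Finsupp.mapDomain_notin_range]
              · have : SL = ∅ := by
                  ext s
                  simp only [hSL, Set.mem_setOf_eq, Set.mem_empty_iff_false, iff_false]
                  rintro ⟨s', rfl, h, -⟩
                  exact hac h
                rw [this, Set.ncard_empty]; norm_num
              · rintro ⟨t, ht⟩
                exact hac (List.head_eq_of_cons_eq ht)
          -- R term
          · rcases eq_or_ne b c with rfl | hbc
            · rw [Finsupp.mapDomain_apply (hconsinj b)]
              have : SR = (.R :: ·) '' {s' : List MS | mrg op s' (a :: x') y' = some z₀} := by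
                ext s
                simp only [hSR, Set.mem_setOf_eq, Set.mem_image]
                constructor
                · rintro ⟨s', rfl, -, h⟩; exact ⟨s', h, rfl⟩
                · rintro ⟨s', h, rfl⟩; exact ⟨s', rfl, by simp, h⟩
              rw [this, Set.ncard_image_of_injective _ (fun u v huv =>
                List.tail_eq_of_cons_eq huv : Function.Injective (MS.R :: · : List MS → List MS))]
              exact ih (a :: x') y' (by simp at hn ⊢; omega) z₀
            · rw [Finsupp.mapDomain_notin_range]
              · have : SR = ∅ := by
                  ext s
                  simp only [hSR, Set.mem_setOf_eq, Set.mem_empty_iff_false, iff_false]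
                  rintro ⟨s', rfl, h, -⟩
                  exact hbc h
                rw [this, Set.ncard_empty]; norm_num
              · rintro ⟨t, ht⟩
                exact hbc (List.head_eq_of_cons_eq ht)
          -- B term
          · rcases eq_or_ne (op a b) c with heq | hoc
            · rw [← heq, Finsupp.mapDomain_apply (hconsinj (op a b))]
              have : SB = (.B :: ·) '' {s' : List MS | mrg op s' x' y' = some z₀} := by
                ext s
                simp only [hSB, Set.mem_setOf_eq, Set.mem_image]
                constructor
                · rintro ⟨s', rfl, -, h⟩; exact ⟨s', h, rfl⟩
                · rintro ⟨s', h, rfl⟩; exact ⟨s', rfl, heq, h⟩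
              rw [this, Set.ncard_image_of_injective _ (fun u v huv =>
                List.tail_eq_of_cons_eq huv : Function.Injective (MS.B :: · : List MS → List MS))]
              exact ih x' y' (by simp at hn ⊢; omega) z₀
            · rw [Finsupp.mapDomain_notin_range]
              · have : SB = ∅ := by
                  ext s
                  simp only [hSB, Set.mem_setOf_eq, Set.mem_empty_iff_false, iff_false]
                  rintro ⟨s', rfl, h, -⟩
                  exact hoc h
                rw [this, Set.ncard_empty]; norm_num
              · rintro ⟨t, ht⟩
                exact hoc (List.head_eq_of_cons_eq ht)
end q1

section assemble
variable {k : Type*} [CommRing k] {E : Type*} [AddCommMonoid E] {m : ℕ}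

lemma mulE_finset (hfin : ∀ e : E, {p : E × E | p.1 + p.2 = e}.Finite)
    (hsub : ∀ a b : E, a ≠ 0 → b ≠ 0 → a + b ≠ 0)
    (f g : ((Fin m × ℕ+) →₀ E) → k) (d : (Fin m × ℕ+) →₀ E) :
    mulE m f g d = ∑ p ∈ (decomp_finite hfin hsub d).toFinset, f p.1 * g p.2 := by
  rw [mulE, ← finsum_mem_coe_finset, Set.Finite.coe_toFinset]

theorem part2 (hfin : ∀ e : E, {p : E × E | p.1 + p.2 = e}.Finite)
    (hsub : ∀ a b : E, a ≠ 0 → b ≠ 0 → a + b ≠ 0)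
    (w₁ w₂ : List (Fin m → E)) (h₁ : ∀ c ∈ w₁, c ≠ 0) (h₂ : ∀ c ∈ w₂, c ≠ 0) :
    ((qsh (k := k) (· + ·) w₁ w₂).sum fun z cz => cz • MwE k m z) =
      mulE m (MwE k m w₁) (MwE k m w₂) := by
  funext d
  -- the sets
  set Tset : Set (List ℕ+ × List ℕ+) :=
    {q | q.1.Chain' (· < ·) ∧ q.2.Chain' (· < ·) ∧ q.1.length = w₁.length ∧
      q.2.length = w₂.length ∧ seqExpE m w₁ q.1 + seqExpE m w₂ q.2 = d} with hTset
  have hΨinj : Set.InjOn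
      (fun q : List ℕ+ × List ℕ+ => (seqExpE m w₁ q.1, seqExpE m w₂ q.2)) Tset := by
    rintro ⟨j₁, j₂⟩ ⟨hc1, hc2, hl1, hl2, -⟩ ⟨j₁', j₂'⟩ ⟨hc1', hc2', hl1', hl2', -⟩ hq
    obtain ⟨he1, he2⟩ := Prod.mk.injEq .. ▸ hq
    have e1 := (seq_uniq h₁ h₁ hc1 hc1' hl1 hl1' (congrArg Prod.fst hq)).2
    have e2 := (seq_uniq h₂ h₂ hc2 hc2' hl2 hl2' (congrArg Prod.snd hq)).2
    exact Prod.ext e1 e2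
  have hTfin : Tset.Finite := by
    refine Set.Finite.of_finite_image ?_ hΨinj
    refine (decomp_finite hfin hsub d).subset ?_
    rintro p ⟨⟨j₁, j₂⟩, ⟨-, -, -, -, hsum⟩, rfl⟩
    exact hsum
  -- RHS = card Tset
  have hRHS : mulE m (MwE k m w₁) (MwE k m w₂) d = (Tset.ncard : k) := by
    rw [mulE_finset hfin hsub]
    have hterm : ∀ p ∈ (decomp_finite hfin hsub d).toFinset,
        MwE k m w₁ p.1 * MwE k m w₂ p.2 =
        if p ∈ (fun q : List ℕ+ × List ℕ+ =>
          (seqExpE m w₁ q.1, seqExpE m w₂ q.2)) '' Tset then 1 else 0 := by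
      rintro ⟨p1, p2⟩ hp
      have hpd : p1 + p2 = d := by simpa using (decomp_finite hfin hsub d).mem_toFinset.mp hp
      rw [MwE, MwE]
      by_cases hex : (∃ j : List ℕ+, j.length = w₁.length ∧ j.Chain' (· < ·) ∧
          seqExpE m w₁ j = p1) ∧ (∃ j : List ℕ+, j.length = w₂.length ∧ j.Chain' (· < ·) ∧
          seqExpE m w₂ j = p2)
      · obtain ⟨⟨j₁, hj1, hj2, hj3⟩, ⟨j₂, hk1, hk2, hk3⟩⟩ := hex
        rw [if_pos ⟨j₁, hj1, hj2, hj3⟩, if_pos ⟨j₂, hk1, hk2, hk3⟩, one_mul, if_pos]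
        exact ⟨(j₁, j₂), ⟨hj2, hk2, hj1, hk1, by rw [hj3, hk3, hpd]⟩, by simp [hj3, hk3]⟩
      · have himneg : (p1, p2) ∉ (fun q : List ℕ+ × List ℕ+ =>
            (seqExpE m w₁ q.1, seqExpE m w₂ q.2)) '' Tset := by
          rintro ⟨⟨j₁, j₂⟩, ⟨hc1, hc2, hl1, hl2, -⟩, hq⟩
          obtain ⟨e1, e2⟩ : seqExpE m w₁ j₁ = p1 ∧ seqExpE m w₂ j₂ = p2 :=
            ⟨congrArg Prod.fst hq, congrArg Prod.snd hq⟩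
          exact hex ⟨⟨j₁, hl1, hc1, e1⟩, ⟨j₂, hl2, hc2, e2⟩⟩
        rcases not_and_or.mp hex with h | h
        · rw [if_neg h, zero_mul, if_neg himneg]
        · rw [if_neg h, mul_zero, if_neg himneg]
    rw [Finset.sum_congr rfl hterm, Finset.sum_boole]
    have himfin : ((fun q : List ℕ+ × List ℕ+ =>
        (seqExpE m w₁ q.1, seqExpE m w₂ q.2)) '' Tset).Finite := hTfin.image _
    have hfilter : ((decomp_finite hfin hsub d).toFinset.filter
        (fun p => p ∈ (fun q : List ℕ+ × List ℕ+ =>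
          (seqExpE m w₁ q.1, seqExpE m w₂ q.2)) '' Tset)) = himfin.toFinset := by
      ext p
      simp only [Finset.mem_filter, Set.Finite.mem_toFinset]
      constructor
      · exact fun h => h.2
      · intro h
        refine ⟨?_, h⟩
        obtain ⟨⟨j₁, j₂⟩, ⟨-, -, -, -, hsum⟩, rfl⟩ := h
        exact hsum
    rw [hfilter, show himfin.toFinset.card = ((fun q : List ℕ+ × List ℕ+ =>
        (seqExpE m w₁ q.1, seqExpE m w₂ q.2)) '' Tset).ncard from
      (Set.ncard_eq_toFinset_card _ himfin).symm, Set.ncard_image_of_injOn hΨinj]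
  -- the merge-pattern set over columns
  set Θ : List MS × List ℕ+ → List ℕ+ × List ℕ+ :=
    fun sj => (exL sj.1 sj.2, exR sj.1 sj.2) with hΘ
  set Wset : Set (List MS × List ℕ+) :=
    {sj | ∃ z, mrg (· + ·) sj.1 w₁ w₂ = some z ∧ sj.2.Chain' (· < ·) ∧
      sj.2.length = z.length ∧ seqExpE m z sj.2 = d} with hWset
  have hWinj : Set.InjOn Θ Wset := by
    rintro ⟨s, j⟩ ⟨z, hz, hcj, hlj, -⟩ ⟨s', j'⟩ ⟨z', hz', hcj', hlj', -⟩ hq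
    obtain ⟨rfl, rfl⟩ := mrg_inj _ s s' j j' hz hz' hcj hcj' hlj hlj'
      (congrArg Prod.fst hq) (congrArg Prod.snd hq)
    rfl
  have hWT : Θ '' Wset = Tset := by
    ext ⟨j₁, j₂⟩
    constructor
    · rintro ⟨⟨s, j⟩, ⟨z, hz, hcj, hlj, hseq⟩, hq⟩
      obtain ⟨hL, hR⟩ : exL s j = j₁ ∧ exR s j = j₂ :=
        ⟨congrArg Prod.fst hq, congrArg Prod.snd hq⟩
      obtain ⟨e1, e2, e3⟩ := mrg_seqExp hz hlj
      refine ⟨?_, ?_, by rw [← hL]; exact e1, by rw [← hR]; exact e2, ?_⟩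
      · rw [← hL, List.Chain', List.isChain_iff_pairwise]
        exact ((List.isChain_iff_pairwise).mp hcj).sublist (exL_sublist s j)
      · rw [← hR, List.Chain', List.isChain_iff_pairwise]
        exact ((List.isChain_iff_pairwise).mp hcj).sublist (exR_sublist s j)
      · rw [← hL, ← hR, ← e3, hseq]
    · rintro ⟨hc1, hc2, hl1, hl2, hsum⟩
      obtain ⟨s, z, j, hz, hcj, hlj, hL, hR, -⟩ := mrg_sur (· + ·)
        (j₁.length + j₂.length) w₁ w₂ j₁ j₂ le_rfl hc1 hc2 hl1 hl2
      refine ⟨(s, j), ⟨z, hz, hcj, hlj, ?_⟩, by simp only [hΘ, hL, hR]⟩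
      obtain ⟨-, -, e3⟩ := mrg_seqExp hz hlj
      rw [e3, hL, hR, hsum]
  have hWfin : Wset.Finite := Set.Finite.of_finite_image (hWT ▸ hTfin) hWinj
  have hWcard : Wset.ncard = Tset.ncard := by rw [← hWT, Set.ncard_image_of_injOn hWinj]
  -- the finite set of merge outputs
  have hZfin : {z : List (Fin m → E) | ∃ s, mrg (· + ·) s w₁ w₂ = some z}.Finite := by
    refine ((List.finite_length_le MS (w₁.length + w₂.length)).image
      (fun s => (mrg (· + ·) s w₁ w₂).getD [])).subset ?_
    rintro z ⟨s, hs⟩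
    exact ⟨s, (mrg_length _ hs).2, by simp [hs]⟩
  -- per-z sets
  have hJcases : ∀ z : List (Fin m → E), (∀ c ∈ z, c ≠ 0) →
      {j : List ℕ+ | j.length = z.length ∧ j.Chain' (· < ·) ∧ seqExpE m z j = d} = ∅ ∨
      ∃ j₀, {j : List ℕ+ | j.length = z.length ∧ j.Chain' (· < ·) ∧ seqExpE m z j = d} = {j₀} := by
    intro z hznz
    by_cases hex : ∃ j : List ℕ+, j.length = z.length ∧ j.Chain' (· < ·) ∧ seqExpE m z j = d
    · obtain ⟨j₀, hj₀⟩ := hex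
      refine Or.inr ⟨j₀, ?_⟩
      ext j
      simp only [Set.mem_setOf_eq, Set.mem_singleton_iff]
      constructor
      · rintro ⟨hj1, hj2, hj3⟩
        exact (seq_uniq hznz hznz hj2 hj₀.2.1 hj1 hj₀.1 (hj3.trans hj₀.2.2.symm)).2
      · rintro rfl; exact hj₀
    · refine Or.inl ?_
      ext j
      simp only [Set.mem_setOf_eq, Set.mem_empty_iff_false, iff_false]
      exact fun hj => hex ⟨j, hj⟩
  have hJfin : ∀ z : List (Fin m → E), (∀ c ∈ z, c ≠ 0) →
      {j : List ℕ+ | j.length = z.length ∧ j.Chain' (· < ·) ∧ seqExpE m z j = d}.Finite := by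
    intro z hznz
    rcases hJcases z hznz with h | ⟨j₀, h⟩
    · rw [h]; exact Set.finite_empty
    · rw [h]; exact Set.finite_singleton j₀
  have hsupp_sub : (qsh (k := k) (· + ·) w₁ w₂).support ⊆ hZfin.toFinset := by
    intro z hz
    rw [Set.Finite.mem_toFinset]
    have hq := Finsupp.mem_support_iff.mp hz
    rw [qsh_coeff (· + ·) (w₁.length + w₂.length) w₁ w₂ le_rfl z] at hq
    by_contra hne
    have hempty : {s : List MS | mrg (· + ·) s w₁ w₂ = some z} = ∅ := by
      ext s
      simp only [Set.mem_setOf_eq, Set.mem_empty_iff_false, iff_false]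
      exact fun h => hne ⟨s, h⟩
    rw [hempty, Set.ncard_empty] at hq
    simp at hq
  have hterm2 : ∀ z ∈ hZfin.toFinset, (qsh (k := k) (· + ·) w₁ w₂) z * MwE k m z d =
      ((({s : List MS | mrg (· + ·) s w₁ w₂ = some z}.ncard *
        {j : List ℕ+ | j.length = z.length ∧ j.Chain' (· < ·) ∧
          seqExpE m z j = d}.ncard : ℕ)) : k) := by
    intro z hzz
    obtain ⟨s₀, hs₀⟩ := (Set.Finite.mem_toFinset _).mp hzz
    have hznz : ∀ c ∈ z, c ≠ 0 := mrg_nonzero hsub hs₀ h₁ h₂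
    have hMz : MwE k m z d = ({j : List ℕ+ | j.length = z.length ∧ j.Chain' (· < ·) ∧
        seqExpE m z j = d}.ncard : k) := by
      rw [MwE]
      rcases hJcases z hznz with h | ⟨j₀, h⟩
      · rw [h, Set.ncard_empty, if_neg]
        · norm_num
        · intro hex
          obtain ⟨j, hj⟩ := hex
          have : j ∈ ({j : List ℕ+ | j.length = z.length ∧ j.Chain' (· < ·) ∧
              seqExpE m z j = d} : Set (List ℕ+)) := hj
          rw [h] at this
          exact this
      · rw [h, Set.ncard_singleton, if_pos]
        · norm_num
        · have : j₀ ∈ ({j₀} : Set (List ℕ+)) := rfl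
          rw [← h] at this
          exact ⟨j₀, this⟩
    rw [qsh_coeff (· + ·) (w₁.length + w₂.length) w₁ w₂ le_rfl z, hMz, Nat.cast_mul]
  -- now compute the LHS
  rw [Finsupp.sum, Finset.sum_apply]
  have step1 : ∀ z ∈ (qsh (k := k) (· + ·) w₁ w₂).support,
      ((qsh (k := k) (· + ·) w₁ w₂) z • MwE k m z) d =
      ((({s : List MS | mrg (· + ·) s w₁ w₂ = some z}.ncard *
        {j : List ℕ+ | j.length = z.length ∧ j.Chain' (· < ·) ∧
          seqExpE m z j = d}.ncard : ℕ)) : k) := by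
    intro z hz
    rw [Pi.smul_apply, smul_eq_mul, hterm2 z (hsupp_sub hz)]
  rw [Finset.sum_congr rfl step1]
  rw [Finset.sum_subset hsupp_sub (fun z hzz hns => ?_)]
  swap
  · -- vanishing off the support
    have h0 : ((qsh (k := k) (· + ·) w₁ w₂) z) = 0 := Finsupp.notMem_support_iff.mp hns
    rw [qsh_coeff (· + ·) (w₁.length + w₂.length) w₁ w₂ le_rfl z] at h0
    rw [Nat.cast_mul, h0, zero_mul]
  rw [← Nat.cast_sum, hRHS, ← hWcard]
  congr 1
  -- the fiberwise count, in ℕ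
  rw [Set.ncard_eq_toFinset_card _ hWfin]
  rw [Finset.card_eq_sum_card_fiberwise
    (f := fun sj : List MS × List ℕ+ => (mrg (· + ·) sj.1 w₁ w₂).getD [])
    (t := hZfin.toFinset) ?_]
  swap
  · rintro ⟨s, j⟩ hsj
    rw [Finset.mem_coe, Set.Finite.mem_toFinset] at hsj ⊢
    obtain ⟨z, hz, -, -, -⟩ := hsj
    exact ⟨s, by simp [hz]⟩
  refine Finset.sum_congr rfl ?_
  intro z hzz
  obtain ⟨s₀, hs₀⟩ := (Set.Finite.mem_toFinset _).mp hzz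
  have hznz : ∀ c ∈ z, c ≠ 0 := mrg_nonzero hsub hs₀ h₁ h₂
  have hfilter2 : (hWfin.toFinset.filter
      (fun sj : List MS × List ℕ+ => (mrg (· + ·) sj.1 w₁ w₂).getD [] = z)) =
      (patSet_finite (· + ·) w₁ w₂ z).toFinset ×ˢ (hJfin z hznz).toFinset := by
    ext ⟨s, j⟩
    simp only [Finset.mem_filter, Set.Finite.mem_toFinset, Finset.mem_product,
      Set.mem_setOf_eq]
    constructor
    · rintro ⟨⟨z', hz', hcj, hlj, hseq⟩, hfz⟩
      rw [hz'] at hfz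
      simp only [Option.getD_some] at hfz
      subst hfz
      exact ⟨hz', hlj, hcj, hseq⟩
    · rintro ⟨hs, hj1, hj2, hj3⟩
      exact ⟨⟨z, hs, hj2, hj1, hj3⟩, by simp [hs]⟩
  rw [hfilter2, Finset.card_product,
    ← Set.ncard_eq_toFinset_card _ (patSet_finite (· + ·) w₁ w₂ z),
    ← Set.ncard_eq_toFinset_card _ (hJfin z hznz)]

end assemble

section part3
variable {k : Type*} [CommRing k] {E : Type*} [AddCommMonoid E] {m : ℕ}
variable (hfin : ∀ e : E, {p : E × E | p.1 + p.2 = e}.Finite)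
variable (hsub : ∀ a b : E, a ≠ 0 → b ≠ 0 → a + b ≠ 0)
include hfin hsub

lemma mulE_zero_right (f : ((Fin m × ℕ+) →₀ E) → k) : mulE m f (0 : ((Fin m × ℕ+) →₀ E) → k) = 0 := by
  funext d
  rw [mulE_finset hfin hsub]
  simp

lemma mulE_zero_left (g : ((Fin m × ℕ+) →₀ E) → k) : mulE m (0 : ((Fin m × ℕ+) →₀ E) → k) g = 0 := by
  funext d
  rw [mulE_finset hfin hsub]
  simp

lemma mulE_add_right (f g h : ((Fin m × ℕ+) →₀ E) → k) :
    mulE m f (g + h) = mulE m f g + mulE m f h := by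
  funext d
  rw [Pi.add_apply, mulE_finset hfin hsub, mulE_finset hfin hsub, mulE_finset hfin hsub,
    ← Finset.sum_add_distrib]
  exact Finset.sum_congr rfl fun p _ => by rw [Pi.add_apply, mul_add]

lemma mulE_add_left (f g h : ((Fin m × ℕ+) →₀ E) → k) :
    mulE m (f + g) h = mulE m f h + mulE m g h := by
  funext d
  rw [Pi.add_apply, mulE_finset hfin hsub, mulE_finset hfin hsub, mulE_finset hfin hsub,
    ← Finset.sum_add_distrib]
  exact Finset.sum_congr rfl fun p _ => by rw [Pi.add_apply, add_mul]

lemma mulE_smul_right (c : k) (f g : ((Fin m × ℕ+) →₀ E) → k) :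
    mulE m f (c • g) = c • mulE m f g := by
  funext d
  rw [Pi.smul_apply, mulE_finset hfin hsub, mulE_finset hfin hsub, smul_eq_mul,
    Finset.mul_sum]
  exact Finset.sum_congr rfl fun p _ => by
    rw [Pi.smul_apply, smul_eq_mul]; ring

lemma mulE_smul_left (c : k) (f g : ((Fin m × ℕ+) →₀ E) → k) :
    mulE m (c • f) g = c • mulE m f g := by
  funext d
  rw [Pi.smul_apply, mulE_finset hfin hsub, mulE_finset hfin hsub, smul_eq_mul,
    Finset.mul_sum]
  exact Finset.sum_congr rfl fun p _ => by
    rw [Pi.smul_apply, smul_eq_mul]; ring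

theorem part3 (f g : ((Fin m × ℕ+) →₀ E) → k)
    (hf : f ∈ Submodule.span k
      (Set.range fun w : {w : List (Fin m → E) // ∀ c ∈ w, c ≠ 0} => MwE k m w.1))
    (hg : g ∈ Submodule.span k
      (Set.range fun w : {w : List (Fin m → E) // ∀ c ∈ w, c ≠ 0} => MwE k m w.1)) :
    mulE m f g ∈ Submodule.span k
      (Set.range fun w : {w : List (Fin m → E) // ∀ c ∈ w, c ≠ 0} => MwE k m w.1) := by
  set S := Set.range fun w : {w : List (Fin m → E) // ∀ c ∈ w, c ≠ 0} => MwE k m w.1 with hS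
  induction hf using Submodule.span_induction with
  | zero => rw [mulE_zero_left hfin hsub]; exact Submodule.zero_mem _
  | add f₁ f₂ hf₁ hf₂ ih₁ ih₂ =>
    rw [mulE_add_left hfin hsub]
    exact Submodule.add_mem _ ih₁ ih₂
  | smul c f₁ hf₁ ih =>
    rw [mulE_smul_left hfin hsub]
    exact Submodule.smul_mem _ c ih
  | mem f₁ hf₁ =>
    obtain ⟨w₁, rfl⟩ := hf₁
    induction hg using Submodule.span_induction with
    | zero => rw [mulE_zero_right hfin hsub]; exact Submodule.zero_mem _
    | add g₁ g₂ hg₁ hg₂ ih₁ ih₂ =>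
      rw [mulE_add_right hfin hsub]
      exact Submodule.add_mem _ ih₁ ih₂
    | smul c g₁ hg₁ ih =>
      rw [mulE_smul_right hfin hsub]
      exact Submodule.smul_mem _ c ih
    | mem g₁ hg₁ =>
      obtain ⟨w₂, rfl⟩ := hg₁
      rw [← part2 hfin hsub w₁.1 w₂.1 w₁.2 w₂.2]
      rw [Finsupp.sum]
      refine Submodule.sum_mem _ fun z hz => ?_
      refine Submodule.smul_mem _ _ ?_
      have hq := Finsupp.mem_support_iff.mp hz
      rw [qsh_coeff (· + ·) (w₁.1.length + w₂.1.length) w₁.1 w₂.1 le_rfl z] at hq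
      have hne : {s : List MS | mrg (· + ·) s w₁.1 w₂.1 = some z}.Nonempty := by
        by_contra hempty
        rw [Set.not_nonempty_iff_eq_empty.mp hempty, Set.ncard_empty] at hq
        simp at hq
      obtain ⟨s, hs⟩ := hne
      have hznz : ∀ c ∈ z, c ≠ 0 := mrg_nonzero hsub hs w₁.2 w₂.2
      exact Submodule.subset_span ⟨⟨z, hznz⟩, rfl⟩

end part3

/-- let `E` be a commutative additively finite monoid whose
nonzero elements form a subsemigroup.  The linear map `M` from the free module
on multi-compositions with exponents in `E` to `EQSym[m]`, `w ↦ M_w`, is a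
bijection (the `M_w` are linearly independent) and transforms the quasi-shuffle
product into the product of power series; consequently the span `EQSym[m]` is a
subalgebra of `k[[X]]^E`. -/
theorem stmt10 (k : Type*) [CommRing k] {E : Type*} [AddCommMonoid E] (m : ℕ)
    (hfin : ∀ e : E, {p : E × E | p.1 + p.2 = e}.Finite)
    (hsub : ∀ a b : E, a ≠ 0 → b ≠ 0 → a + b ≠ 0) :
    LinearIndependent k
        (fun w : {w : List (Fin m → E) // ∀ c ∈ w, c ≠ 0} => MwE k m w.1) ∧
      (∀ w₁ w₂ : List (Fin m → E), (∀ c ∈ w₁, c ≠ 0) → (∀ c ∈ w₂, c ≠ 0) →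
        ((qsh (k := k) (· + ·) w₁ w₂).sum fun z cz => cz • MwE k m z) =
          mulE m (MwE k m w₁) (MwE k m w₂)) ∧
      (∀ f g : ((Fin m × ℕ+) →₀ E) → k,
        f ∈ Submodule.span k
          (Set.range fun w : {w : List (Fin m → E) // ∀ c ∈ w, c ≠ 0} => MwE k m w.1) →
        g ∈ Submodule.span k
          (Set.range fun w : {w : List (Fin m → E) // ∀ c ∈ w, c ≠ 0} => MwE k m w.1) →
        mulE m f g ∈ Submodule.span k
          (Set.range fun w : {w : List (Fin m → E) // ∀ c ∈ w, c ≠ 0} => MwE k m w.1)) :=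
  ⟨part1 k, fun w₁ w₂ h₁ h₂ => part2 hfin hsub w₁ w₂ h₁ h₂,
   fun f g hf hg => part3 hfin hsub f g hf hg⟩
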